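/- Second-order design regret bound: Let H be a convex subset of ℝ^k, let f : ℝ^k → ℝ be differentiable, and suppose there exists m > 0 such that for all η₁, η₂ ∈ H, f(η₂) ≤ f(η₁) + ⟨∇f(η₁), η₂ − η₁⟩ − (m/2)‖η₂ − η₁‖². Let η_O ∈ H be a maximizer of f over H. Let g : ℝ^k → ℝ be differentiable, let η̂ ∈ H satisfy ∇g(η̂) = 0, and suppose r ≥ 0 satisfies ‖∇g(η) − ∇f(η)‖ ≤ r for all η ∈ H. Then f(η_O) − f(η̂) ≤ r²/(2m). -/
import Mathlib


open scoped RealInnerProductSpace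

/-- Second-order design regret bound: if the oracle objective `f` is `m`-strongly
concave on the convex feasible set `H` (first-order upper bound with curvature
`m`), `η_O` maximizes `f` over `H`, the plug-in objective `g` has vanishing
gradient at its interior maximizer `η̂ ∈ H`, and the gradients of `g` and `f`
differ by at most `r` uniformly over `H`, then `f η_O − f η̂ ≤ r² / (2m)`. -/
theorem second_order_regret_bound
    {k : ℕ} {H : Set (EuclideanSpace ℝ (Fin k))} (hconv : Convex ℝ H)
    (f : EuclideanSpace ℝ (Fin k) → ℝ) (hf : Differentiable ℝ f)
    (m : ℝ) (hm : 0 < m)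
    (hconc : ∀ η₁ ∈ H, ∀ η₂ ∈ H,
      f η₂ ≤ f η₁ + ⟪gradient f η₁, η₂ - η₁⟫ - m / 2 * ‖η₂ - η₁‖ ^ 2)
    (ηO : EuclideanSpace ℝ (Fin k)) (hηO : ηO ∈ H)
    (hmax : ∀ η ∈ H, f η ≤ f ηO)
    (g : EuclideanSpace ℝ (Fin k) → ℝ) (hg : Differentiable ℝ g)
    (ηhat : EuclideanSpace ℝ (Fin k)) (hηhat : ηhat ∈ H)
    (hcrit : gradient g ηhat = 0)
    (r : ℝ) (hr : 0 ≤ r)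
    (hgrad : ∀ η ∈ H, ‖gradient g η - gradient f η‖ ≤ r) :
    f ηO - f ηhat ≤ r ^ 2 / (2 * m) := by
  have hgf : ‖gradient f ηhat‖ ≤ r := by
    have := hgrad ηhat hηhat
    rw [hcrit] at this
    simpa [zero_sub, norm_neg] using this
  have key := hconc ηhat hηhat ηO hηO
  set d := ηO - ηhat with hd
  have hip : ⟪gradient f ηhat, d⟫ ≤ r * ‖d‖ := by
    calc ⟪gradient f ηhat, d⟫ ≤ ‖gradient f ηhat‖ * ‖d‖ := real_inner_le_norm _ _
    _ ≤ r * ‖d‖ := by gcongr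
  have hquad : r * ‖d‖ - m / 2 * ‖d‖ ^ 2 ≤ r ^ 2 / (2 * m) := by
    have h := sq_nonneg (r - m * ‖d‖)
    have hm' : (0:ℝ) < 2 * m := by linarith
    rw [le_div_iff₀ hm']
    nlinarith [sq_nonneg (r - m * ‖d‖)]
  nlinarith [key, hip, hquad]
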